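/- arXiv:1609.09133 — 2 statements merged into one kernel-verified Lean document; each statement's English description precedes it below -/
import Mathlib

section
/- The generalized Bernoulli numbers attached to a Dirichlet character χ with conductor d can be recovered from the generalized Daehee numbers via B_{m,χ} = Σ_{n=0}^{m} 𝔇_{n,χ} S₂(m,n), where S₂(m,n) are the Stirling numbers of the second kind. -/
open Finset PowerSeries

/-- The formal power series `log(1+t) = ∑_{n≥1} (-1)^{n+1} tⁿ/n`. -/
noncomputable def logOneAdd : PowerSeries ℂ :=
  PowerSeries.mk fun n => if n = 0 then 0 else (-1) ^ (n + 1) / (n : ℂ)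

/-- Stirling numbers of the second kind, defined by
`(eᵗ−1)ⁿ/n! = ∑ₘ S₂(m,n) tᵐ/m!`. -/
noncomputable def stirlingSecond (m n : ℕ) : ℂ :=
  (m.factorial : ℂ) *
    PowerSeries.coeff m (((n.factorial : ℂ))⁻¹ • (PowerSeries.exp ℂ - 1) ^ n)

/-- The formal exponential series `e^{ct} = ∑ₙ cⁿ tⁿ/n!`. -/
noncomputable def expC (c : ℂ) : PowerSeries ℂ :=
  PowerSeries.mk fun n => c ^ n / (n.factorial : ℂ)


noncomputable def em1 : PowerSeries ℂ := PowerSeries.exp ℂ - 1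

lemma em1_const : constantCoeff em1 = 0 := by
  simp [em1, PowerSeries.exp, ← coeff_zero_eq_constantCoeff]

lemma coeff_pow_em1_eq_zero {m n : ℕ} (h : m < n) : PowerSeries.coeff m (em1 ^ n) = 0 := by
  have hx : (PowerSeries.X : PowerSeries ℂ) ^ n ∣ em1 ^ n :=
    pow_dvd_pow_of_dvd (PowerSeries.X_dvd_iff.mpr em1_const) n
  exact (PowerSeries.X_pow_dvd_iff.mp hx) m h

noncomputable def Phi (g : PowerSeries ℂ) : PowerSeries ℂ :=
  PowerSeries.mk fun m =>
    ∑ n ∈ Finset.range (m + 1), PowerSeries.coeff n g * PowerSeries.coeff m (em1 ^ n)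

lemma Phi_coeff_aeval (g : PowerSeries ℂ) (p : Polynomial ℂ) (m : ℕ)
    (h : ∀ k ≤ m, p.coeff k = PowerSeries.coeff k g) :
    PowerSeries.coeff m (Phi g) = PowerSeries.coeff m (Polynomial.aeval em1 p) := by
  set N := max (p.natDegree + 1) (m + 1) with hN
  have hL : PowerSeries.coeff m (Phi g)
      = ∑ n ∈ Finset.range N, p.coeff n * PowerSeries.coeff m (em1 ^ n) := by
    rw [Phi, coeff_mk]
    rw [Finset.sum_congr rfl (fun n hn => by
      rw [← h n (Nat.lt_succ_iff.mp (Finset.mem_range.mp hn))])]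
    apply Finset.sum_subset (Finset.range_subset_range.mpr (le_max_right _ _))
    intro n _ hn
    rw [coeff_pow_em1_eq_zero (by simpa using Finset.mem_range.not.mp hn), mul_zero]
  have hR : PowerSeries.coeff m (Polynomial.aeval em1 p)
      = ∑ n ∈ Finset.range N, p.coeff n * PowerSeries.coeff m (em1 ^ n) := by
    rw [Polynomial.aeval_eq_sum_range, map_sum]
    rw [Finset.sum_congr rfl (fun n _ => by
      rw [LinearMap.map_smul, smul_eq_mul] :
      ∀ n ∈ Finset.range (p.natDegree + 1), PowerSeries.coeff m (p.coeff n • em1 ^ n)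
        = p.coeff n * PowerSeries.coeff m (em1 ^ n))]
    apply Finset.sum_subset (Finset.range_subset_range.mpr (le_max_left _ _))
    intro n _ hn
    rw [Polynomial.coeff_eq_zero_of_natDegree_lt (by simpa using Finset.mem_range.not.mp hn),
      zero_mul]
  rw [hL, hR]

lemma Phi_C (c : ℂ) : Phi (PowerSeries.C c) = PowerSeries.C c := by
  ext m
  rw [Phi_coeff_aeval _ (Polynomial.C c) m (fun k _ => by
    simp [Polynomial.coeff_C, PowerSeries.coeff_C])]
  rw [Polynomial.aeval_C]
  rfl

lemma Phi_one : Phi 1 = 1 := by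
  have := Phi_C 1
  simpa using this

lemma Phi_add (g h : PowerSeries ℂ) : Phi (g + h) = Phi g + Phi h := by
  ext m
  simp [Phi, add_mul, Finset.sum_add_distrib]

lemma Phi_X : Phi PowerSeries.X = em1 := by
  ext m
  rw [Phi_coeff_aeval _ Polynomial.X m (fun k _ => by
    simp [Polynomial.coeff_X, PowerSeries.coeff_X, eq_comm])]
  rw [Polynomial.aeval_X]

lemma Phi_mul (g h : PowerSeries ℂ) : Phi (g * h) = Phi g * Phi h := by
  ext m
  set p := PowerSeries.trunc (m + 1) g with hp
  set q := PowerSeries.trunc (m + 1) h with hq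
  have hpg : ∀ k ≤ m, p.coeff k = PowerSeries.coeff k g := fun k hk => by
    rw [hp, PowerSeries.coeff_trunc, if_pos (Nat.lt_succ_of_le hk)]
  have hqh : ∀ k ≤ m, q.coeff k = PowerSeries.coeff k h := fun k hk => by
    rw [hq, PowerSeries.coeff_trunc, if_pos (Nat.lt_succ_of_le hk)]
  have hpq : ∀ k ≤ m, (p * q).coeff k = PowerSeries.coeff k (g * h) := by
    intro k hk
    rw [Polynomial.coeff_mul, PowerSeries.coeff_mul]
    apply Finset.sum_congr rfl
    intro x hx
    have hx1 : x.1 ≤ k := by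
      have := Finset.HasAntidiagonal.antidiagonal.fst_le hx
      omega
    have hx2 : x.2 ≤ k := Finset.HasAntidiagonal.antidiagonal.snd_le hx
    rw [hpg x.1 (hx1.trans hk), hqh x.2 (hx2.trans hk)]
  rw [Phi_coeff_aeval _ (p * q) m hpq, map_mul]
  rw [PowerSeries.coeff_mul, PowerSeries.coeff_mul]
  apply Finset.sum_congr rfl
  intro x hx
  have hx1 : x.1 ≤ m := by
    have := Finset.HasAntidiagonal.antidiagonal.fst_le hx
    omega
  have hx2 : x.2 ≤ m := Finset.HasAntidiagonal.antidiagonal.snd_le hx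
  rw [Phi_coeff_aeval g p x.1 (fun k hk => hpg k (hk.trans hx1)),
    Phi_coeff_aeval h q x.2 (fun k hk => hqh k (hk.trans hx2))]

lemma Phi_pow (g : PowerSeries ℂ) (n : ℕ) : Phi (g ^ n) = Phi g ^ n := by
  induction n with
  | zero => simpa using Phi_one
  | succ n ih => rw [pow_succ, pow_succ, Phi_mul, ih]

lemma Phi_sum {α : Type*} (s : Finset α) (f : α → PowerSeries ℂ) :
    Phi (∑ a ∈ s, f a) = ∑ a ∈ s, Phi (f a) := by
  induction s using Finset.cons_induction with
  | empty => simpa using Phi_C 0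
  | cons a s ha ih => rw [Finset.sum_cons, Finset.sum_cons, Phi_add, ih]

lemma aeval_chain (p : Polynomial ℂ) :
    d⁄dX ℂ (Polynomial.aeval em1 p)
      = Polynomial.aeval em1 (Polynomial.derivative p) * d⁄dX ℂ em1 := by
  induction p using Polynomial.induction_on' with
  | add p q hp hq =>
    rw [map_add, map_add, hp, hq, map_add, map_add, add_mul]
  | monomial n a =>
    rw [Polynomial.aeval_monomial, Polynomial.derivative_monomial, Polynomial.aeval_monomial]
    rw [Derivation.leibniz, Derivation.leibniz_pow, Derivation.map_algebraMap, smul_zero,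
      add_zero]
    simp only [Algebra.smul_def, nsmul_eq_mul, map_mul, map_natCast, Algebra.algebraMap_self_apply, eq_natCast]
    ring

lemma Phi_deriv (g : PowerSeries ℂ) :
    d⁄dX ℂ (Phi g) = Phi (d⁄dX ℂ g) * d⁄dX ℂ em1 := by
  ext m
  set p := PowerSeries.trunc (m + 2) g with hp
  have hpg : ∀ k ≤ m + 1, p.coeff k = PowerSeries.coeff k g := fun k hk => by
    rw [hp, PowerSeries.coeff_trunc, if_pos (by omega)]
  have hder : ∀ k ≤ m, (Polynomial.derivative p).coeff k = PowerSeries.coeff k (d⁄dX ℂ g) := by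
    intro k hk
    rw [Polynomial.coeff_derivative, PowerSeries.coeff_derivative, hpg (k+1) (by omega)]
  rw [PowerSeries.coeff_derivative, Phi_coeff_aeval g p (m+1) hpg, ← PowerSeries.coeff_derivative,
    aeval_chain]
  rw [PowerSeries.coeff_mul, PowerSeries.coeff_mul]
  apply Finset.sum_congr rfl
  intro x hx
  have hx1 : x.1 ≤ m := by
    have := Finset.HasAntidiagonal.antidiagonal.fst_le hx
    omega
  rw [Phi_coeff_aeval _ (Polynomial.derivative p) x.1 (fun k hk => hder k (hk.trans hx1))]

lemma deriv_logOneAdd : (1 + PowerSeries.X) * d⁄dX ℂ logOneAdd = 1 := by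
  have hd : ∀ n : ℕ, PowerSeries.coeff n (d⁄dX ℂ logOneAdd) = (-1 : ℂ) ^ n := by
    intro n
    rw [PowerSeries.coeff_derivative, logOneAdd, coeff_mk, if_neg (Nat.succ_ne_zero n)]
    have hn : ((n : ℂ) + 1) ≠ 0 := by
      exact_mod_cast n.succ_ne_zero
    push_cast
    field_simp
    ring
  ext m
  rw [add_mul, one_mul, map_add]
  cases m with
  | zero =>
    simp [hd 0]
  | succ m =>
    rw [PowerSeries.coeff_succ_X_mul, hd, hd, PowerSeries.coeff_one, if_neg (Nat.succ_ne_zero m)]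
    rw [pow_succ]
    ring

lemma derivExp : d⁄dX ℂ (PowerSeries.exp ℂ) = PowerSeries.exp ℂ := by
  ext n
  rw [PowerSeries.coeff_derivative, PowerSeries.coeff_exp, PowerSeries.coeff_exp]
  have h1 : ((n + 1).factorial : ℚ) = (n + 1) * (n.factorial : ℚ) := by
    rw [Nat.factorial_succ]; push_cast; ring
  rw [show ((1 : ℚ) / ((n+1).factorial)) = (1 / n.factorial) * (1 / (n+1)) by
    rw [h1]; field_simp]
  rw [map_mul]
  have : (algebraMap ℚ ℂ) (1 / ((n : ℚ) + 1)) * ((n : ℂ) + 1) = 1 := by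
    have hn : ((n : ℂ) + 1) ≠ 0 := by exact_mod_cast n.succ_ne_zero
    rw [map_div₀, map_one]
    rw [show (algebraMap ℚ ℂ) ((n : ℚ) + 1) = (n : ℂ) + 1 by push_cast; simp]
    rw [one_div, inv_mul_cancel₀ hn]
  push_cast at this ⊢
  rw [mul_assoc, this, mul_one]

lemma deriv_em1 : d⁄dX ℂ em1 = PowerSeries.exp ℂ := by
  rw [em1, map_sub, derivExp]
  simp

lemma Phi_one_add_X : Phi (1 + PowerSeries.X) = PowerSeries.exp ℂ := by
  rw [Phi_add, Phi_one, Phi_X, em1]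
  ring

lemma Phi_logOneAdd : Phi logOneAdd = PowerSeries.X := by
  apply PowerSeries.derivative.ext
  · rw [Phi_deriv, deriv_em1, PowerSeries.derivative_X]
    calc Phi (d⁄dX ℂ logOneAdd) * PowerSeries.exp ℂ
        = Phi (d⁄dX ℂ logOneAdd) * Phi (1 + PowerSeries.X) := by rw [Phi_one_add_X]
      _ = Phi ((1 + PowerSeries.X) * d⁄dX ℂ logOneAdd) := by rw [← Phi_mul, mul_comm]
      _ = 1 := by rw [deriv_logOneAdd, Phi_one]
  · rw [← PowerSeries.coeff_zero_eq_constantCoeff_apply, ← PowerSeries.coeff_zero_eq_constantCoeff_apply]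
    simp [Phi, logOneAdd]

lemma exp_pow (k : ℕ) : PowerSeries.exp ℂ ^ k = expC (k : ℂ) := by
  rw [PowerSeries.exp_pow_eq_rescale_exp]
  ext n
  rw [PowerSeries.coeff_rescale, PowerSeries.coeff_exp, expC, coeff_mk, map_div₀, map_one]
  push_cast
  ring

lemma Phi_sub (g h : PowerSeries ℂ) : Phi (g - h) = Phi g - Phi h := by
  ext m
  simp [Phi, sub_mul, Finset.sum_sub_distrib]

lemma stirling_eq (m n : ℕ) :
    (m.factorial : ℂ) * PowerSeries.coeff m
        (((n.factorial : ℂ))⁻¹ • (PowerSeries.exp ℂ - 1) ^ n)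
      = (m.factorial : ℂ) * ((n.factorial : ℂ)⁻¹ * PowerSeries.coeff m (em1 ^ n)) := by
  rw [LinearMap.map_smul, smul_eq_mul]
  rfl

theorem generalized_bernoulli_eq_sum_daehee'
    (d : ℕ) (hd : 0 < d) (χ : DirichletCharacter ℂ d)
    (B : ℕ → ℂ)
    (hB : (PowerSeries.mk fun n => B n / (n.factorial : ℂ)) * (expC (d : ℂ) - 1) =
      PowerSeries.X * ∑ j ∈ Finset.range d,
        PowerSeries.C (χ (j : ZMod d)) * expC (j : ℂ))
    (D : ℕ → ℂ)
    (hD : (PowerSeries.mk fun m => D m / (m.factorial : ℂ)) *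
        ((1 + PowerSeries.X) ^ d - 1) =
      logOneAdd * ∑ j ∈ Finset.range d,
        PowerSeries.C (χ (j : ZMod d)) * (1 + PowerSeries.X) ^ j) :
    ∀ m : ℕ, B m = ∑ n ∈ Finset.range (m + 1), D n *
      ((m.factorial : ℂ) * PowerSeries.coeff m
        (((n.factorial : ℂ))⁻¹ • (PowerSeries.exp ℂ - 1) ^ n)) := by
  have hexp : expC (d : ℂ) - 1 ≠ 0 := by
    intro h
    have h1 := congrArg (PowerSeries.coeff 1) h
    simp [expC, PowerSeries.coeff_one] at h1
    omega
  have key : (PowerSeries.mk fun n => B n / (n.factorial : ℂ))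
      = Phi (PowerSeries.mk fun m => D m / (m.factorial : ℂ)) := by
    apply mul_right_cancel₀ hexp
    rw [hB]
    have hphi := congrArg Phi hD
    rw [Phi_mul, Phi_mul, Phi_logOneAdd, Phi_sum, Phi_sub, Phi_pow, Phi_one_add_X, Phi_one,
      exp_pow] at hphi
    rw [hphi]
    congr 1
    apply Finset.sum_congr rfl
    intro j _
    rw [Phi_mul, Phi_C, Phi_pow, Phi_one_add_X, exp_pow]
  intro m
  have hm := congrArg (PowerSeries.coeff m) key
  rw [coeff_mk, Phi, coeff_mk] at hm
  have hfac : (m.factorial : ℂ) ≠ 0 := Nat.cast_ne_zero.mpr m.factorial_ne_zero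
  calc B m = (m.factorial : ℂ) * (B m / (m.factorial : ℂ)) := by field_simp
    _ = (m.factorial : ℂ) * ∑ n ∈ Finset.range (m + 1),
        (PowerSeries.coeff n (PowerSeries.mk fun k => D k / (k.factorial : ℂ)))
          * PowerSeries.coeff m (em1 ^ n) := by rw [hm]
    _ = _ := by
        rw [Finset.mul_sum]
        apply Finset.sum_congr rfl
        intro n _
        rw [stirling_eq, coeff_mk]
        have hn : (n.factorial : ℂ) ≠ 0 := Nat.cast_ne_zero.mpr n.factorial_ne_zero
        field_simp

theorem generalized_bernoulli_eq_sum_daehee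
    (d : ℕ) (hd : 0 < d) (χ : DirichletCharacter ℂ d)
    (B : ℕ → ℂ)
    -- generalized Bernoulli numbers: ∑_{j<d} χ(j) t e^{jt}/(e^{dt} − 1) = ∑ₙ Bₙ,χ tⁿ/n!
    (hB : (PowerSeries.mk fun n => B n / (n.factorial : ℂ)) * (expC (d : ℂ) - 1) =
      PowerSeries.X * ∑ j ∈ Finset.range d,
        PowerSeries.C (χ (j : ZMod d)) * expC (j : ℂ))
    (D : ℕ → ℂ)
    -- generalized Daehee numbers:
    -- ∑_{j<d} χ(j) log(1+t)(1+t)ʲ/((1+t)^d − 1) = ∑ₘ 𝔇ₘ,χ tᵐ/m!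
    (hD : (PowerSeries.mk fun m => D m / (m.factorial : ℂ)) *
        ((1 + PowerSeries.X) ^ d - 1) =
      logOneAdd * ∑ j ∈ Finset.range d,
        PowerSeries.C (χ (j : ZMod d)) * (1 + PowerSeries.X) ^ j) :
    ∀ m : ℕ, B m = ∑ n ∈ Finset.range (m + 1), D n * stirlingSecond m n := by
  intro m
  exact generalized_bernoulli_eq_sum_daehee' d hd χ B hB D hD m
end

section
/- The fermionic p-adic integral of the binomial coefficient function satisfies ∫_{ℤ_p} C(x,j) dμ_{−1}(x) = (−1)^j/2^j, i.e., lim_{N→∞} Σ_{x=0}^{p^N−1} (−1)^x C(x,j) = (−1)^j/2^j in ℚ_p, for odd prime p. -/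
open Finset Filter Nat

variable {K : Type*} [Field K] [CharZero K]

lemma cast_choose_prod (n i : ℕ) :
    (n.choose i : K) = (∏ k ∈ Finset.range i, ((n : K) - k)) / (i ! : K) := by
  rcases lt_or_ge n i with h | h
  · rw [Nat.choose_eq_zero_of_lt h, Nat.cast_zero, eq_comm, div_eq_zero_iff]
    left
    exact Finset.prod_eq_zero (Finset.mem_range.2 h) (by simp)
  · have : ∏ k ∈ Finset.range i, ((n : K) - k) = ((n.descFactorial i : ℕ) : K) := by
      rw [Nat.descFactorial_eq_prod_range, Nat.cast_prod]
      refine Finset.prod_congr rfl fun k hk => ?_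
      have hk' : k ≤ n := le_trans (le_of_lt (Finset.mem_range.1 hk)) h
      push_cast [Nat.cast_sub hk']
      ring
    rw [this, Nat.descFactorial_eq_factorial_mul_choose, Nat.cast_mul, eq_comm,
      mul_comm, mul_div_assoc, div_self (by exact_mod_cast i.factorial_ne_zero), mul_one]

omit [CharZero K] in
lemma Tsum_pascal (j n : ℕ) :
    (∑ i ∈ Finset.range (j + 1), (-2 : K) ^ i * (n.choose i : K))
      + ∑ i ∈ Finset.range (j + 1), (-2 : K) ^ i * ((n + 1).choose i : K)
      = 2 * (-2) ^ j * (n.choose j : K) := by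
  induction j with
  | zero => simp; ring
  | succ j ih =>
    have e1 : (∑ i ∈ Finset.range (j + 1 + 1), (-2 : K) ^ i * (n.choose i : K))
        = (∑ i ∈ Finset.range (j + 1), (-2 : K) ^ i * (n.choose i : K))
          + (-2) ^ (j+1) * (n.choose (j+1) : K) := Finset.sum_range_succ _ _
    have e2 : (∑ i ∈ Finset.range (j + 1 + 1), (-2 : K) ^ i * ((n+1).choose i : K))
        = (∑ i ∈ Finset.range (j + 1), (-2 : K) ^ i * ((n+1).choose i : K))
          + (-2) ^ (j+1) * ((n+1).choose (j+1) : K) := Finset.sum_range_succ _ _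
    have hp : ((n + 1).choose (j + 1) : K) = (n.choose j : K) + (n.choose (j+1) : K) := by
      rw [Nat.choose_succ_succ]; push_cast; ring
    rw [e1, e2, hp]
    linear_combination ih

lemma key_identity (j n : ℕ) :
    (∑ x ∈ Finset.range n, (-1 : K) ^ x * (x.choose j : K))
      = ((-1) ^ j / 2 ^ (j + 1))
        * (1 - (-1) ^ n * ∑ i ∈ Finset.range (j + 1), (-2 : K) ^ i * (n.choose i : K)) := by
  induction n with
  | zero =>
    rw [Finset.sum_range_zero]
    have : (∑ i ∈ Finset.range (j + 1), (-2 : K) ^ i * ((0 : ℕ).choose i : K)) = 1 := by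
      rw [Finset.sum_eq_single 0]
      · simp
      · intro i _ hi
        rcases Nat.exists_eq_succ_of_ne_zero hi with ⟨k, rfl⟩
        simp [Nat.choose_eq_zero_of_lt (Nat.succ_pos k)]
      · simp
    rw [this]
    ring
  | succ n ih =>
    rw [Finset.sum_range_succ, ih]
    have h2 := Tsum_pascal (K := K) j n
    have hT : (∑ i ∈ Finset.range (j + 1), (-2 : K) ^ i * ((n+1).choose i : K))
        = 2 * (-2) ^ j * (n.choose j : K)
          - ∑ i ∈ Finset.range (j + 1), (-2 : K) ^ i * (n.choose i : K) := by
      linear_combination h2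
    have h1 : (-1 : K) ^ (n + 1) = -(-1) ^ n := by ring
    rw [hT, h1]
    have hm : (-1 : K) ^ j * (-2) ^ j = 2 ^ j := by
      rw [← mul_pow]; norm_num
    field_simp
    linear_combination (-(-1 : K) ^ n * (n.choose j : K) * 2) * hm

theorem fermionic_integral_choose (p : ℕ) [hp : Fact p.Prime] (hodd : Odd p) (j : ℕ) :
    Filter.Tendsto
      (fun N : ℕ => ∑ x ∈ Finset.range (p ^ N), (-1 : ℚ_[p]) ^ x * (x.choose j : ℚ_[p]))
      Filter.atTop (nhds ((-1) ^ j / 2 ^ j)) := by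
  have hpodd : ∀ N : ℕ, ((-1 : ℚ_[p]) ^ (p ^ N) = -1) := fun N =>
    Odd.neg_one_pow (hodd.pow)
  have heq : ∀ N : ℕ,
      (∑ x ∈ Finset.range (p ^ N), (-1 : ℚ_[p]) ^ x * (x.choose j : ℚ_[p]))
        = ((-1) ^ j / 2 ^ (j + 1))
          * (1 + ∑ i ∈ Finset.range (j + 1), (-2 : ℚ_[p]) ^ i * ((p ^ N).choose i : ℚ_[p])) := by
    intro N
    rw [key_identity, hpodd N]
    ring
  simp only [heq]
  have hplim : Filter.Tendsto (fun N : ℕ => ((p ^ N : ℕ) : ℚ_[p])) Filter.atTop (nhds 0) := by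
    have : (fun N : ℕ => ((p ^ N : ℕ) : ℚ_[p])) = fun N => (p : ℚ_[p]) ^ N := by
      funext N; push_cast; ring
    rw [this]
    exact tendsto_pow_atTop_nhds_zero_of_norm_lt_one Padic.norm_p_lt_one
  have hchoose : ∀ i : ℕ, Filter.Tendsto (fun N : ℕ => (((p ^ N).choose i : ℕ) : ℚ_[p]))
      Filter.atTop (nhds (if i = 0 then 1 else 0)) := by
    intro i
    have hfun : (fun N : ℕ => (((p ^ N).choose i : ℕ) : ℚ_[p]))
        = (fun x : ℚ_[p] => (∏ k ∈ Finset.range i, (x - k)) / (i ! : ℚ_[p]))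
            ∘ (fun N => ((p ^ N : ℕ) : ℚ_[p])) := by
      funext N
      simp only [Function.comp_apply]
      exact cast_choose_prod _ _
    have hcont : Continuous (fun x : ℚ_[p] => (∏ k ∈ Finset.range i, (x - k)) / (i ! : ℚ_[p])) := by
      apply Continuous.div_const
      exact continuous_finset_prod _ (fun k _ => continuous_id.sub continuous_const)
    have h := (hcont.tendsto 0).comp hplim
    rw [← hfun] at h
    convert h using 2
    rcases Nat.eq_zero_or_pos i with rfl | hi
    · simp
    · rw [if_neg (Nat.pos_iff_ne_zero.1 hi), eq_comm, div_eq_zero_iff]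
      left
      exact Finset.prod_eq_zero (Finset.mem_range.2 hi) (by simp)
  have hsum : Filter.Tendsto
      (fun N : ℕ => ∑ i ∈ Finset.range (j + 1), (-2 : ℚ_[p]) ^ i * ((p ^ N).choose i : ℚ_[p]))
      Filter.atTop (nhds 1) := by
    have h1 : (1 : ℚ_[p]) = ∑ i ∈ Finset.range (j + 1),
        (-2 : ℚ_[p]) ^ i * (if i = 0 then 1 else 0) := by
      rw [Finset.sum_eq_single 0] <;> simp
    rw [h1]
    exact tendsto_finset_sum _ (fun i _ => (hchoose i).const_mul _)
  have hfinal := (hsum.const_add 1).const_mul ((-1 : ℚ_[p]) ^ j / 2 ^ (j + 1))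
  have hval : ((-1 : ℚ_[p]) ^ j / 2 ^ j) = ((-1) ^ j / 2 ^ (j + 1)) * (1 + 1) := by ring
  rw [hval]
  exact hfinal
end
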